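/- Let G be a basic CUH graph in which both D and D̃ are realized, and let C ⊆ R be a finite clique of red vertices. If there is a blue vertex adjacent to every vertex of C, then there exist two non-adjacent blue vertices each of which is adjacent to every vertex of C. -/
import Mathlib


open SimpleGraph

/-- A partial colored isomorphism of the 2-colored graph `(G, red)`, defined on the set `S`:
an injective map preserving colors and adjacency on `S`. -/
def IsPartialIso {V : Type} (G : SimpleGraph V) (red : V → Prop) (S : Set V) (f : V → V) :
    Prop :=
  Set.InjOn f S ∧ (∀ v ∈ S, (red (f v) ↔ red v)) ∧
    ∀ u ∈ S, ∀ v ∈ S, (G.Adj (f u) (f v) ↔ G.Adj u v)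

/-- A 2-colored graph is ultrahomogeneous if every isomorphism between two finite induced
colored subgraphs extends to a color-preserving automorphism. -/
def Ultrahomogeneous {V : Type} (G : SimpleGraph V) (red : V → Prop) : Prop :=
  ∀ S : Set V, S.Finite → ∀ f : V → V, IsPartialIso G red S f →
    ∃ ψ : G ≃g G, (∀ v, red (ψ v) ↔ red v) ∧ ∀ v ∈ S, ψ v = f v

/-- The set `P` induces a disjoint union of cliques in `G` (no induced monochromatic `P₃`). -/
def IsUnionOfCliques {V : Type} (G : SimpleGraph V) (P : Set V) : Prop :=
  ∀ u ∈ P, ∀ v ∈ P, ∀ w ∈ P, G.Adj u v → G.Adj v w → u ≠ w → G.Adj u w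

/-- `M` is an inclusion-wise maximal clique of the subgraph of `G` induced on `P`. -/
def IsMaxCliqueIn {V : Type} (G : SimpleGraph V) (P : Set V) (M : Set V) : Prop :=
  M ⊆ P ∧ G.IsClique M ∧ ∀ M' : Set V, M' ⊆ P → G.IsClique M' → M ⊆ M' → M = M'

/-- `S` is an independent set in `G`. -/
def IsIndepIn {V : Type} (G : SimpleGraph V) (S : Set V) : Prop :=
  ∀ u ∈ S, ∀ v ∈ S, ¬ G.Adj u v

/-- The 2-colored graph `(H, redH)` is realized in `(G, red)`, i.e. isomorphic to an
induced colored subgraph of `G`. -/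
def Realizes {V : Type} (G : SimpleGraph V) (red : V → Prop) {W : Type} (H : SimpleGraph W)
    (redH : W → Prop) : Prop :=
  ∃ f : W → V, Function.Injective f ∧ (∀ w, red (f w) ↔ redH w) ∧
    ∀ u w : W, G.Adj (f u) (f w) ↔ H.Adj u w

/-- `(H, redH)` is minimally omitted in `(G, red)`: it is omitted, but every proper induced
subgraph of it is realized. -/
def MinOmitted {V : Type} (G : SimpleGraph V) (red : V → Prop) {W : Type} (H : SimpleGraph W)
    (redH : W → Prop) : Prop :=
  ¬ Realizes G red H redH ∧
    ∀ S : Set W, S ≠ Set.univ → Realizes G red (H.induce S) (fun x => redH x.1)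

/-- Isomorphism of 2-colored graphs. -/
def ColoredIso {V : Type} (G : SimpleGraph V) (red : V → Prop) {W : Type} (H : SimpleGraph W)
    (redH : W → Prop) : Prop :=
  ∃ e : G ≃g H, ∀ v, red v ↔ redH (e v)

/-- The graph obtained from `G` by complementing the cross edges while keeping the
edges inside each color class. -/
def crossComp {V : Type} (G : SimpleGraph V) (red : V → Prop) : SimpleGraph V :=
  SimpleGraph.fromRel (fun u v =>
    ((red u ↔ red v) ∧ G.Adj u v) ∨ (¬ (red u ↔ red v) ∧ ¬ G.Adj u v))

/-- The blow-up of the 2-colored graph `(H, redH)` (whose red class should be independent),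
replacing every red vertex by a copy of `I` forming a clique, joined to the neighbors of the
original vertex. -/
def blowUp {V : Type} (H : SimpleGraph V) (redH : V → Prop) (I : Type) :
    SimpleGraph ({v : V // redH v} × I ⊕ {v : V // ¬ redH v}) :=
  SimpleGraph.fromRel (fun x y =>
    match x, y with
    | Sum.inl (u, i), Sum.inl (u', i') => H.Adj u.1 u'.1 ∨ (u = u' ∧ i ≠ i')
    | Sum.inl (u, _), Sum.inr b => H.Adj u.1 b.1
    | Sum.inr b, Sum.inl (u, _) => H.Adj b.1 u.1
    | Sum.inr b, Sum.inr b' => H.Adj b.1 b'.1)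

/-- The coloring of the blow-up: all vertices replacing red vertices are red. -/
def blowUpRed (V : Type) (redH : V → Prop) (I : Type) :
    ({v : V // redH v} × I ⊕ {v : V // ¬ redH v}) → Prop :=
  Sum.elim (fun _ => True) (fun _ => False)

/-- `(G, red)` is a blow-up with the red class blown up: it is isomorphic (as a colored graph)
to the blow-up of some `(H, redH)` with independent red class by an `i`-clique, `2 ≤ i ≤ ℵ₀`. -/
def IsBlowUpOf {V : Type} (G : SimpleGraph V) (red : V → Prop) : Prop :=
  ∃ (U : Type) (H : SimpleGraph U) (redH : U → Prop) (I : Type),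
    (∀ u v : U, redH u → redH v → ¬ H.Adj u v) ∧
    2 ≤ Cardinal.mk I ∧ Cardinal.mk I ≤ Cardinal.aleph0 ∧
    ∃ e : G ≃g blowUp H redH I, ∀ v, red v ↔ blowUpRed U redH I (e v)

/-- `(G, red)` is a blow-up (of one of its two color classes). -/
def IsBlowUp {V : Type} (G : SimpleGraph V) (red : V → Prop) : Prop :=
  IsBlowUpOf G red ∨ IsBlowUpOf G (fun v => ¬ red v)

/-- A CUH graph: a countably infinite ultrahomogeneous 2-colored graph in which both
color classes induce disjoint unions of cliques. -/
def IsCUH {V : Type} (G : SimpleGraph V) (red : V → Prop) : Prop :=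
  Countable V ∧ Infinite V ∧ Ultrahomogeneous G red ∧
    IsUnionOfCliques G {v | red v} ∧ IsUnionOfCliques G {v | ¬ red v}

/-- A basic CUH graph: a CUH graph which is not a blow-up and where both independence
numbers are at least 2. -/
def IsBasicCUH {V : Type} (G : SimpleGraph V) (red : V → Prop) : Prop :=
  IsCUH G red ∧ ¬ IsBlowUp G red ∧
    (∃ u v, red u ∧ red v ∧ u ≠ v ∧ ¬ G.Adj u v) ∧
    (∃ u v, ¬ red u ∧ ¬ red v ∧ u ≠ v ∧ ¬ G.Adj u v)

/-- The graph `D`: red vertices `0, 1`, blue vertices `2, 3`, edges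
`{01, 23, 02, 03, 12}` (a 2-colored diamond). -/
def Dgraph : SimpleGraph (Fin 4) :=
  SimpleGraph.fromRel (fun x y =>
    (x = 0 ∧ y = 1) ∨ (x = 2 ∧ y = 3) ∨ (x = 0 ∧ y = 2) ∨ (x = 0 ∧ y = 3) ∨ (x = 1 ∧ y = 2))

/-- The coloring of `D` and `D̃`: `0, 1` are red, `2, 3` are blue. -/
def Dred : Fin 4 → Prop := fun x => x = 0 ∨ x = 1

/-- The graph `D̃`, the cross-edge complement of `D`: the path `0 – 1 – 3 – 2`. -/
def Dtilde : SimpleGraph (Fin 4) :=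
  SimpleGraph.fromRel (fun x y => (x = 0 ∧ y = 1) ∨ (x = 1 ∧ y = 3) ∨ (x = 3 ∧ y = 2))

/-- `T_r`: the triangle with two red vertices and one blue vertex. -/
def Tr : SimpleGraph (Fin 3) := ⊤

/-- The coloring of `T_r` and `T̃_r`: `0, 1` red, `2` blue. -/
def TrRed : Fin 3 → Prop := fun x => x = 0 ∨ x = 1

/-- `T̃_r`: a red edge together with an isolated blue vertex. -/
def TrTilde : SimpleGraph (Fin 3) := SimpleGraph.fromRel (fun x y => x = 0 ∧ y = 1)

/-- `T_b`: the triangle with one red vertex and two blue vertices. -/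
def Tb : SimpleGraph (Fin 3) := ⊤

/-- The coloring of `T_b` and `T̃_b`: `0` red, `1, 2` blue. -/
def TbRed : Fin 3 → Prop := fun x => x = 0

/-- `T̃_b`: a blue edge together with an isolated red vertex. -/
def TbTilde : SimpleGraph (Fin 3) := SimpleGraph.fromRel (fun x y => x = 1 ∧ y = 2)

instance : DecidableRel Dgraph.Adj := fun a b =>
  decidable_of_iff _ (SimpleGraph.fromRel_adj _ a b).symm
instance : DecidableRel Dtilde.Adj := fun a b =>
  decidable_of_iff _ (SimpleGraph.fromRel_adj _ a b).symm
instance : DecidablePred Dred := fun x =>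
  inferInstanceAs (Decidable (x = 0 ∨ x = 1))

section Aux
variable {V : Type} {G : SimpleGraph V} {red : V → Prop}

theorem aux_conj_blocks [DecidableEq V] (hUH : Ultrahomogeneous G red)
    (Q₁ M₁ Q₂ M₂ : Finset V) (z₁ z₂ : V)
    (hr1 : ∀ v ∈ Q₁ ∪ M₁, red v) (hr2 : ∀ v ∈ Q₂ ∪ M₂, red v)
    (hc1 : ∀ u ∈ Q₁ ∪ M₁, ∀ v ∈ Q₁ ∪ M₁, u ≠ v → G.Adj u v)
    (hc2 : ∀ u ∈ Q₂ ∪ M₂, ∀ v ∈ Q₂ ∪ M₂, u ≠ v → G.Adj u v)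
    (hd1 : Disjoint Q₁ M₁) (hd2 : Disjoint Q₂ M₂)
    (hz1 : ¬ red z₁) (hz2 : ¬ red z₂)
    (ha1 : ∀ v ∈ Q₁, G.Adj z₁ v) (hn1 : ∀ v ∈ M₁, ¬ G.Adj z₁ v)
    (ha2 : ∀ v ∈ Q₂, G.Adj z₂ v) (hn2 : ∀ v ∈ M₂, ¬ G.Adj z₂ v)
    (hq : Q₁.card = Q₂.card) (hm : M₁.card = M₂.card) :
    ∃ ψ : G ≃g G, (∀ v, red (ψ v) ↔ red v) ∧ ψ z₁ = z₂ ∧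
      (∀ v ∈ Q₁, ψ v ∈ Q₂) ∧ (∀ v ∈ M₁, ψ v ∈ M₂) ∧
      (∀ w ∈ Q₂, ∃ v ∈ Q₁, ψ v = w) ∧ (∀ w ∈ M₂, ∃ v ∈ M₁, ψ v = w) := by
  classical
  have eQ : ↥Q₁ ≃ ↥Q₂ := Finset.equivOfCardEq hq
  have eM : ↥M₁ ≃ ↥M₂ := Finset.equivOfCardEq hm
  set f : V → V := fun v =>
    if h : v ∈ Q₁ then (eQ ⟨v, h⟩ : V)
    else if h : v ∈ M₁ then (eM ⟨v, h⟩ : V)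
    else if v = z₁ then z₂ else v with hf
  have hz1Q : z₁ ∉ Q₁ := fun h => hz1 (hr1 z₁ (Finset.mem_union_left _ h))
  have hz1M : z₁ ∉ M₁ := fun h => hz1 (hr1 z₁ (Finset.mem_union_right _ h))
  have hz2Q : z₂ ∉ Q₂ := fun h => hz2 (hr2 z₂ (Finset.mem_union_left _ h))
  have hz2M : z₂ ∉ M₂ := fun h => hz2 (hr2 z₂ (Finset.mem_union_right _ h))
  have hfQ : ∀ {v} (h : v ∈ Q₁), f v = (eQ ⟨v, h⟩ : V) := by
    intro v h; simp only [hf, dif_pos h]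
  have hfM : ∀ {v} (h : v ∈ M₁), f v = (eM ⟨v, h⟩ : V) := by
    intro v h
    have hvQ : v ∉ Q₁ := Finset.disjoint_right.1 hd1 h
    simp only [hf, dif_neg hvQ, dif_pos h]
  have hfz : f z₁ = z₂ := by
    simp only [hf]
    rw [dif_neg hz1Q, dif_neg hz1M]
    simp
  have hfQmem : ∀ {v}, v ∈ Q₁ → f v ∈ Q₂ := by
    intro v h; rw [hfQ h]; exact (eQ ⟨v, h⟩).2
  have hfMmem : ∀ {v}, v ∈ M₁ → f v ∈ M₂ := by
    intro v h; rw [hfM h]; exact (eM ⟨v, h⟩).2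
  -- the domain
  set S : Set V := ↑(Q₁ ∪ M₁ ∪ {z₁}) with hS
  have hmemS : ∀ v, v ∈ S ↔ (v ∈ Q₁ ∨ v ∈ M₁ ∨ v = z₁) := by
    intro v
    simp only [hS, Finset.mem_coe, Finset.mem_union, Finset.mem_singleton, or_assoc]
  -- injectivity facts for block maps
  have hinjQ : ∀ {u v} (hu : u ∈ Q₁) (hv : v ∈ Q₁), f u = f v → u = v := by
    intro u v hu hv h
    rw [hfQ hu, hfQ hv] at h
    have := eQ.injective (Subtype.coe_injective h)
    exact congrArg Subtype.val this
  have hinjM : ∀ {u v} (hu : u ∈ M₁) (hv : v ∈ M₁), f u = f v → u = v := by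
    intro u v hu hv h
    rw [hfM hu, hfM hv] at h
    have := eM.injective (Subtype.coe_injective h)
    exact congrArg Subtype.val this
  have hred : ∀ {v}, v ∈ S → (red (f v) ↔ red v) := by
    intro v hv
    rcases (hmemS v).1 hv with h | h | h
    · constructor <;> intro
      · exact hr1 v (Finset.mem_union_left _ h)
      · exact hr2 _ (Finset.mem_union_left _ (hfQmem h))
    · constructor <;> intro
      · exact hr1 v (Finset.mem_union_right _ h)
      · exact hr2 _ (Finset.mem_union_right _ (hfMmem h))
    · subst h; rw [hfz]
      constructor <;> intro h'
      · exact absurd h' hz2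
      · exact absurd h' hz1
  have hinj : Set.InjOn f S := by
    intro u hu v hv h
    rcases (hmemS u).1 hu with h1 | h1 | h1 <;> rcases (hmemS v).1 hv with h2 | h2 | h2
    · exact hinjQ h1 h2 h
    · exact absurd h (by
        intro h
        have := hfQmem h1; rw [h, hfM h2] at this
        exact Finset.disjoint_left.1 hd2 this (eM ⟨v, h2⟩).2)
    · subst h2; rw [hfz] at h; exact absurd (h ▸ hfQmem h1) hz2Q
    · exact absurd h (by
        intro h
        have := hfMmem h1; rw [h, hfQ h2] at this
        exact Finset.disjoint_right.1 hd2 this (eQ ⟨v, h2⟩).2)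
    · exact hinjM h1 h2 h
    · subst h2; rw [hfz] at h; exact absurd (h ▸ hfMmem h1) hz2M
    · subst h1; rw [hfz] at h; exact absurd (h.symm ▸ hfQmem h2) hz2Q
    · subst h1; rw [hfz] at h; exact absurd (h.symm ▸ hfMmem h2) hz2M
    · rw [h1, h2]
  have hadj : ∀ u ∈ S, ∀ v ∈ S, (G.Adj (f u) (f v) ↔ G.Adj u v) := by
    intro u hu v hv
    have key : ∀ {a b : V}, a ∈ Q₁ ∪ M₁ → b ∈ Q₁ ∪ M₁ →
        (G.Adj (f a) (f b) ↔ G.Adj a b) := by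
      intro a b ha hb
      have hfa : f a ∈ Q₂ ∪ M₂ := by
        rcases Finset.mem_union.1 ha with h | h
        · exact Finset.mem_union_left _ (hfQmem h)
        · exact Finset.mem_union_right _ (hfMmem h)
      have hfb : f b ∈ Q₂ ∪ M₂ := by
        rcases Finset.mem_union.1 hb with h | h
        · exact Finset.mem_union_left _ (hfQmem h)
        · exact Finset.mem_union_right _ (hfMmem h)
      constructor
      · intro h
        have hne : f a ≠ f b := h.ne
        have : a ≠ b := fun hab => hne (by rw [hab])
        exact hc1 a ha b hb this
      · intro h
        have hab : a ≠ b := h.ne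
        have : f a ≠ f b := by
          intro hfe
          apply hab
          have haS : a ∈ S := by
            rw [hmemS]; rcases Finset.mem_union.1 ha with h' | h'
            exacts [Or.inl h', Or.inr (Or.inl h')]
          have hbS : b ∈ S := by
            rw [hmemS]; rcases Finset.mem_union.1 hb with h' | h'
            exacts [Or.inl h', Or.inr (Or.inl h')]
          exact hinj haS hbS hfe
        exact hc2 _ hfa _ hfb this
    have keyz : ∀ {a : V}, a ∈ Q₁ ∪ M₁ → (G.Adj (f a) (f z₁) ↔ G.Adj a z₁) := by
      intro a ha
      rw [hfz]
      rcases Finset.mem_union.1 ha with h | h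
      · constructor <;> intro
        · exact (ha1 a h).symm
        · exact (ha2 _ (hfQmem h)).symm
      · constructor <;> intro h'
        · exact absurd h'.symm (hn2 _ (hfMmem h))
        · exact absurd h'.symm (hn1 a h)
    rcases (hmemS u).1 hu with h1 | h1 | h1 <;> rcases (hmemS v).1 hv with h2 | h2 | h2
    · exact key (Finset.mem_union_left _ h1) (Finset.mem_union_left _ h2)
    · exact key (Finset.mem_union_left _ h1) (Finset.mem_union_right _ h2)
    · subst h2; exact keyz (Finset.mem_union_left _ h1)
    · exact key (Finset.mem_union_right _ h1) (Finset.mem_union_left _ h2)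
    · exact key (Finset.mem_union_right _ h1) (Finset.mem_union_right _ h2)
    · subst h2; exact keyz (Finset.mem_union_right _ h1)
    · have h' := keyz (Finset.mem_union_left _ h2)
      rw [h1]
      exact ⟨fun hh => (h'.1 hh.symm).symm, fun hh => (h'.2 hh.symm).symm⟩
    · have h' := keyz (Finset.mem_union_right _ h2)
      rw [h1]
      exact ⟨fun hh => (h'.1 hh.symm).symm, fun hh => (h'.2 hh.symm).symm⟩
    · rw [h1, h2]
      rw [hfz]
      simp
  obtain ⟨ψ, hψcol, hψ⟩ := hUH S (Set.Finite.ofFinset _ (fun x => Iff.rfl)) f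
    ⟨hinj, fun v hv => hred hv, hadj⟩
  have hψQ : ∀ v ∈ Q₁, ψ v = f v := fun v hv =>
    hψ v ((hmemS v).2 (Or.inl hv))
  have hψM : ∀ v ∈ M₁, ψ v = f v := fun v hv =>
    hψ v ((hmemS v).2 (Or.inr (Or.inl hv)))
  refine ⟨ψ, hψcol, ?_, ?_, ?_, ?_, ?_⟩
  · rw [hψ z₁ ((hmemS z₁).2 (Or.inr (Or.inr rfl))), hfz]
  · intro v hv; rw [hψQ v hv]; exact hfQmem hv
  · intro v hv; rw [hψM v hv]; exact hfMmem hv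
  · intro w hw
    refine ⟨(eQ.symm ⟨w, hw⟩ : V), (eQ.symm ⟨w, hw⟩).2, ?_⟩
    rw [hψQ _ (eQ.symm ⟨w, hw⟩).2, hfQ (eQ.symm ⟨w, hw⟩).2]
    simp
  · intro w hw
    refine ⟨(eM.symm ⟨w, hw⟩ : V), (eM.symm ⟨w, hw⟩).2, ?_⟩
    rw [hψM _ (eM.symm ⟨w, hw⟩).2, hfM (eM.symm ⟨w, hw⟩).2]
    simp

theorem aux_conj_cliques [DecidableEq V] (hUH : Ultrahomogeneous G red)
    (Q₁ Q₂ : Finset V)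
    (hr1 : ∀ v ∈ Q₁, red v) (hr2 : ∀ v ∈ Q₂, red v)
    (hc1 : ∀ u ∈ Q₁, ∀ v ∈ Q₁, u ≠ v → G.Adj u v)
    (hc2 : ∀ u ∈ Q₂, ∀ v ∈ Q₂, u ≠ v → G.Adj u v)
    (hq : Q₁.card = Q₂.card) :
    ∃ ψ : G ≃g G, (∀ v, red (ψ v) ↔ red v) ∧
      (∀ v ∈ Q₁, ψ v ∈ Q₂) ∧ (∀ w ∈ Q₂, ∃ v ∈ Q₁, ψ v = w) := by
  classical
  have eQ : ↥Q₁ ≃ ↥Q₂ := Finset.equivOfCardEq hq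
  set f : V → V := fun v => if h : v ∈ Q₁ then (eQ ⟨v, h⟩ : V) else v with hf
  have hfQ : ∀ {v} (h : v ∈ Q₁), f v = (eQ ⟨v, h⟩ : V) := by
    intro v h; simp only [hf, dif_pos h]
  have hfQmem : ∀ {v}, v ∈ Q₁ → f v ∈ Q₂ := by
    intro v h; rw [hfQ h]; exact (eQ ⟨v, h⟩).2
  have hinjQ : ∀ {u v} (hu : u ∈ Q₁) (hv : v ∈ Q₁), f u = f v → u = v := by
    intro u v hu hv h
    rw [hfQ hu, hfQ hv] at h
    have := eQ.injective (Subtype.coe_injective h)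
    exact congrArg Subtype.val this
  set S : Set V := ↑Q₁ with hS
  have hinj : Set.InjOn f S := fun u hu v hv h => hinjQ hu hv h
  have hred : ∀ v ∈ S, (red (f v) ↔ red v) := by
    intro v hv
    constructor <;> intro
    · exact hr1 v hv
    · exact hr2 _ (hfQmem hv)
  have hadj : ∀ u ∈ S, ∀ v ∈ S, (G.Adj (f u) (f v) ↔ G.Adj u v) := by
    intro u hu v hv
    constructor
    · intro h
      exact hc1 u hu v hv (fun hh => h.ne (by rw [hh]))
    · intro h
      refine hc2 _ (hfQmem hu) _ (hfQmem hv) ?_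
      intro hh
      exact h.ne (hinjQ hu hv hh)
  obtain ⟨ψ, hψcol, hψ⟩ := hUH S (Set.Finite.ofFinset _ (fun x => Iff.rfl)) f
    ⟨hinj, hred, hadj⟩
  refine ⟨ψ, hψcol, ?_, ?_⟩
  · intro v hv; rw [hψ v hv]; exact hfQmem hv
  · intro w hw
    refine ⟨(eQ.symm ⟨w, hw⟩ : V), (eQ.symm ⟨w, hw⟩).2, ?_⟩
    rw [hψ _ (eQ.symm ⟨w, hw⟩).2, hfQ (eQ.symm ⟨w, hw⟩).2]
    simp

theorem aux_conj_triangle (hUH : Ultrahomogeneous G red)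
    (a y z a' y' z' : V)
    (hra : red a) (hra' : red a')
    (hby : ¬ red y) (hbz : ¬ red z) (hby' : ¬ red y') (hbz' : ¬ red z')
    (hay : G.Adj a y) (haz : G.Adj a z) (hyz : G.Adj y z)
    (hay' : G.Adj a' y') (haz' : G.Adj a' z') (hyz' : G.Adj y' z') :
    ∃ ψ : G ≃g G, (∀ v, red (ψ v) ↔ red v) ∧ ψ a = a' ∧ ψ y = y' ∧ ψ z = z' := by
  classical
  have hay0 : a ≠ y := fun h => hby (h ▸ hra)
  have haz0 : a ≠ z := fun h => hbz (h ▸ hra)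
  have hyz0 : y ≠ z := hyz.ne
  have hay0' : a' ≠ y' := fun h => hby' (h ▸ hra')
  have haz0' : a' ≠ z' := fun h => hbz' (h ▸ hra')
  have hyz0' : y' ≠ z' := hyz'.ne
  set f : V → V := fun v => if v = a then a' else if v = y then y' else if v = z then z' else v
    with hf
  have hfa : f a = a' := by simp [hf]
  have hfy : f y = y' := by
    simp only [hf]
    rw [if_neg (fun h => hay0 h.symm)]
    simp
  have hfz : f z = z' := by
    simp only [hf]
    rw [if_neg (fun h => haz0 h.symm), if_neg (fun h => hyz0 h.symm)]
    simp
  set S : Set V := {a, y, z} with hS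
  have hmem : ∀ v, v ∈ S ↔ v = a ∨ v = y ∨ v = z := by intro v; simp [hS]
  have hfv : ∀ v, v ∈ S → (v = a ∧ f v = a') ∨ (v = y ∧ f v = y') ∨ (v = z ∧ f v = z') := by
    intro v hv
    rcases (hmem v).1 hv with h | h | h
    · exact Or.inl ⟨h, by rw [h, hfa]⟩
    · exact Or.inr (Or.inl ⟨h, by rw [h, hfy]⟩)
    · exact Or.inr (Or.inr ⟨h, by rw [h, hfz]⟩)
  have hinj : Set.InjOn f S := by
    intro u hu v hv h
    rcases hfv u hu with ⟨h1, e1⟩ | ⟨h1, e1⟩ | ⟨h1, e1⟩ <;>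
      rcases hfv v hv with ⟨h2, e2⟩ | ⟨h2, e2⟩ | ⟨h2, e2⟩ <;>
      rw [e1, e2] at h <;> first
      | (exact absurd h hay0')
      | (exact absurd h haz0')
      | (exact absurd h hyz0')
      | (exact absurd h.symm hay0')
      | (exact absurd h.symm haz0')
      | (exact absurd h.symm hyz0')
      | (rw [h1, h2])
  have hred : ∀ v ∈ S, (red (f v) ↔ red v) := by
    intro v hv
    rcases hfv v hv with ⟨h1, e1⟩ | ⟨h1, e1⟩ | ⟨h1, e1⟩ <;> rw [e1, h1] <;>
      constructor <;> intro h <;> first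
      | exact hra | exact hra' | exact absurd h hby | exact absurd h hby'
      | exact absurd h hbz | exact absurd h hbz'
  have hadj : ∀ u ∈ S, ∀ v ∈ S, (G.Adj (f u) (f v) ↔ G.Adj u v) := by
    intro u hu v hv
    rcases hfv u hu with ⟨h1, e1⟩ | ⟨h1, e1⟩ | ⟨h1, e1⟩ <;>
      rcases hfv v hv with ⟨h2, e2⟩ | ⟨h2, e2⟩ | ⟨h2, e2⟩ <;> rw [e1, e2, h1, h2] <;>
      first
      | (simp [G.irrefl])
      | (exact iff_of_true hay' hay)
      | (exact iff_of_true haz' haz)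
      | (exact iff_of_true hyz' hyz)
      | (exact iff_of_true hay'.symm hay.symm)
      | (exact iff_of_true haz'.symm haz.symm)
      | (exact iff_of_true hyz'.symm hyz.symm)
  obtain ⟨ψ, hψcol, hψ⟩ := hUH S (Set.toFinite _) f ⟨hinj, hred, hadj⟩
  refine ⟨ψ, hψcol, ?_, ?_, ?_⟩
  · rw [hψ a ((hmem a).2 (Or.inl rfl)), hfa]
  · rw [hψ y ((hmem y).2 (Or.inr (Or.inl rfl))), hfy]
  · rw [hψ z ((hmem z).2 (Or.inr (Or.inr rfl))), hfz]

end Aux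
set_option maxHeartbeats 2000000 in
theorem key_lemma {V : Type} (G : SimpleGraph V) (red : V → Prop)
    (hUH : Ultrahomogeneous G red)
    (hRC : IsUnionOfCliques G {v | red v}) (hBC : IsUnionOfCliques G {v | ¬ red v})
    (hBpair : ∃ u v, ¬ red u ∧ ¬ red v ∧ u ≠ v ∧ ¬ G.Adj u v)
    (hD : Realizes G red Dgraph Dred) (hDt : Realizes G red Dtilde Dred) :
    ∀ n : ℕ, ∀ C : Finset V, C.card ≤ n → (∀ v ∈ C, red v) →
      (∀ u ∈ C, ∀ v ∈ C, u ≠ v → G.Adj u v) → ∀ b, ¬ red b → (∀ v ∈ C, G.Adj b v) →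
      ∃ f, ¬ red f ∧ f ≠ b ∧ ¬ G.Adj f b ∧ ∀ v ∈ C, G.Adj f v := by
  classical
  -- transitivity within color classes
  have hRtrans : ∀ {u a v : V}, red u → red a → red v → G.Adj u a → G.Adj a v → u ≠ v →
      G.Adj u v := by
    intro u a v hu ha hv h1 h2 hne
    exact hRC u hu a ha v hv h1 h2 hne
  have hBtrans : ∀ {u a v : V}, ¬ red u → ¬ red a → ¬ red v → G.Adj u a → G.Adj a v → u ≠ v →
      G.Adj u v := by
    intro u a v hu ha hv h1 h2 hne
    exact hBC u hu a ha v hv h1 h2 hne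
  -- extract the D copy
  obtain ⟨fD, hDinj, hDcol, hDadj⟩ := hD
  set rd1 := fD 0 with hrd1def
  set rd2 := fD 1 with hrd2def
  set bd1 := fD 2 with hbd1def
  set bd2 := fD 3 with hbd2def
  have hrd1 : red rd1 := (hDcol 0).2 (by decide)
  have hrd2 : red rd2 := (hDcol 1).2 (by decide)
  have hbd1 : ¬ red bd1 := fun h => (by decide : ¬ Dred 2) ((hDcol 2).1 h)
  have hbd2 : ¬ red bd2 := fun h => (by decide : ¬ Dred 3) ((hDcol 3).1 h)
  have hD12 : G.Adj rd1 rd2 := (hDadj 0 1).2 (by decide)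
  have hD34 : G.Adj bd1 bd2 := (hDadj 2 3).2 (by decide)
  have hD13 : G.Adj rd1 bd1 := (hDadj 0 2).2 (by decide)
  have hD14 : G.Adj rd1 bd2 := (hDadj 0 3).2 (by decide)
  have hD23 : G.Adj rd2 bd1 := (hDadj 1 2).2 (by decide)
  have hD24 : ¬ G.Adj rd2 bd2 := fun h => (by decide : ¬ Dgraph.Adj 1 3) ((hDadj 1 3).1 h)
  -- extract the D-tilde copy
  obtain ⟨fT, hTinj, hTcol, hTadj⟩ := hDt
  set rt2 := fT 1 with hrt2def
  set bt1 := fT 2 with hbt1def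
  set bt2 := fT 3 with hbt2def
  have hrt2 : red rt2 := (hTcol 1).2 (by decide)
  have hbt1 : ¬ red bt1 := fun h => (by decide : ¬ Dred 2) ((hTcol 2).1 h)
  have hbt2 : ¬ red bt2 := fun h => (by decide : ¬ Dred 3) ((hTcol 3).1 h)
  have hT13 : G.Adj rt2 bt2 := (hTadj 1 3).2 (by decide)
  have hT32 : G.Adj bt2 bt1 := (hTadj 3 2).2 (by decide)
  have hT12 : ¬ G.Adj rt2 bt1 := fun h => (by decide : ¬ Dtilde.Adj 1 2) ((hTadj 1 2).1 h)
  -- main induction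
  intro n
  induction n with
  | zero =>
    intro C hcard _ _ b hb _
    have hC0 : C = ∅ := Finset.card_eq_zero.1 (Nat.le_zero.1 hcard)
    subst hC0
    obtain ⟨u₁, u₂, hu₁, hu₂, hne, hnadj⟩ := hBpair
    obtain ⟨ψ, hcol, hz, -, -, -, -⟩ :=
      aux_conj_blocks hUH (∅ : Finset V) ∅ ∅ ∅ u₁ b (by simp) (by simp) (by simp) (by simp)
        (by simp) (by simp) hu₁ hb (by simp) (by simp) (by simp) (by simp) rfl rfl
    refine ⟨ψ u₂, fun h => hu₂ ((hcol u₂).1 h), ?_, ?_, by simp⟩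
    · intro h
      exact hne (ψ.injective (by rw [h, hz]))
    · intro h
      rw [← hz] at h
      exact hnadj (ψ.map_adj_iff.1 h.symm)
  | succ n ih =>
    intro C hcard hCred hCcl b hb hbC
    by_cases hle : C.card ≤ n
    · exact ih C hle hCred hCcl b hb hbC
    have hk : C.card = n + 1 := le_antisymm hcard (not_le.1 hle)
    by_contra hcon
    push_neg at hcon
    -- hcon : ∀ f, ¬red f → f ≠ b → ¬G.Adj f b → ∃ v ∈ C, ¬G.Adj f v
    have hstar : ∀ q, ¬ red q → (∀ v ∈ C, G.Adj q v) → q = b ∨ G.Adj q b := by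
      intro q hq hfull
      by_cases h1 : q = b
      · exact Or.inl h1
      by_cases h2 : G.Adj q b
      · exact Or.inr h2
      obtain ⟨v, hv, hnv⟩ := hcon q hq h1 h2
      exact absurd (hfull v hv) hnv
    by_cases hn0 : n = 0
    · -- |C| = 1
      subst hn0
      obtain ⟨r, hr⟩ := Finset.card_eq_one.1 hk
      subst hr
      have hrred : red r := hCred r (Finset.mem_singleton_self r)
      have hbr : G.Adj b r := hbC r (Finset.mem_singleton_self r)
      -- find a blue vertex far from r and b
      have hc₀ : ∃ c₀, ¬ red c₀ ∧ ¬ G.Adj c₀ r ∧ ¬ G.Adj c₀ b ∧ c₀ ≠ b := by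
        by_contra h
        push_neg at h
        -- h : ∀ c₀, ¬red c₀ → ¬Adj c₀ r → ¬Adj c₀ b → c₀ = b
        have key : ∀ u, ¬ red u → u = b ∨ G.Adj u b := by
          intro u hu
          by_cases h1 : u = b
          · exact Or.inl h1
          right
          by_cases h2 : G.Adj u b
          · exact h2
          by_cases h3 : G.Adj u r
          · obtain ⟨v, hv, hnv⟩ := hcon u hu h1 h2
            rw [Finset.mem_singleton] at hv
            subst hv
            exact absurd h3 hnv
          · exact absurd (h u hu h3 h2) h1
        obtain ⟨u₁, u₂, hu₁, hu₂, hne, hnadj⟩ := hBpair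
        rcases key u₁ hu₁ with h1 | h1 <;> rcases key u₂ hu₂ with h2 | h2
        · exact hne (h1.trans h2.symm)
        · subst h1; exact hnadj h2.symm
        · subst h2; exact hnadj h1
        · exact hnadj (hBtrans hu₁ hb hu₂ h1 h2.symm hne)
      obtain ⟨c₀, hc₀b, hc₀r, hc₀adj, hc₀ne⟩ := hc₀
      -- conjugate the non-adjacent red-blue pair (rt2, bt1) onto (r, c₀)
      obtain ⟨ψ, hcol, hz, -, hM, -, -⟩ :=
        aux_conj_blocks hUH (∅ : Finset V) {rt2} ∅ {r} bt1 c₀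
          (by simpa using hrt2) (by simpa using hrred)
          (by intro u hu v hv hne; simp at hu hv; subst hu; subst hv; exact absurd rfl hne)
          (by intro u hu v hv hne; simp at hu hv; subst hu; subst hv; exact absurd rfl hne)
          (by simp) (by simp) hbt1 hc₀b (by simp) (by simpa using fun h => hT12 h.symm)
          (by simp) (by simpa using hc₀r) rfl (by simp)
      have hψrt2 : ψ rt2 = r := by
        have := hM rt2 (Finset.mem_singleton_self rt2)
        simpa using this
      -- d := ψ bt2 is blue, adjacent to r and to c₀
      set d := ψ bt2 with hd
      have hdb : ¬ red d := fun h => hbt2 ((hcol bt2).1 h)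
      have hdr : G.Adj d r := by
        rw [hd, ← hψrt2]
        exact ψ.map_adj_iff.2 hT13.symm
      have hdc₀ : G.Adj d c₀ := by
        rw [hd, ← hz]
        exact ψ.map_adj_iff.2 hT32
      rcases hstar d hdb (by intro v hv; rw [Finset.mem_singleton] at hv; subst hv; exact hdr)
        with h | h
      · subst h
        exact hc₀adj hdc₀.symm
      · exact hc₀adj (hBtrans hc₀b hdb hb hdc₀.symm h hc₀ne)
    · -- |C| = n+1 ≥ 2
      have hn1 : 1 ≤ n := Nat.one_le_iff_ne_zero.2 hn0
      obtain ⟨x, hx⟩ := Finset.card_pos.1 (by omega : 0 < C.card)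
      set B := C.erase x with hBdef
      have hBcard : B.card = n := by
        rw [hBdef, Finset.card_erase_of_mem hx, hk]
        omega
      have hBsub : B ⊆ C := Finset.erase_subset x C
      have hBred : ∀ v ∈ B, red v := fun v hv => hCred v (hBsub hv)
      have hBcl : ∀ u ∈ B, ∀ v ∈ B, u ≠ v → G.Adj u v :=
        fun u hu v hv hne => hCcl u (hBsub hu) v (hBsub hv) hne
      have hbB : ∀ v ∈ B, G.Adj b v := fun v hv => hbC v (hBsub hv)
      have hxB : x ∉ B := Finset.notMem_erase x C
      have hmemC : ∀ v, v ∈ C ↔ v = x ∨ v ∈ B := by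
        intro v
        constructor
        · intro hv
          by_cases h : v = x
          · exact Or.inl h
          · exact Or.inr (Finset.mem_erase.2 ⟨h, hv⟩)
        · rintro (h | h)
          · subst h; exact hx
          · exact hBsub h
      obtain ⟨w, hwb, hwne, hwnadj, hwB⟩ := ih B (le_of_eq hBcard) hBred hBcl b hb hbB
      have hwx : ¬ G.Adj w x := by
        intro h
        obtain ⟨v, hv, hnv⟩ := hcon w hwb hwne hwnadj
        rcases (hmemC v).1 hv with h' | h'
        · subst h'; exact hnv h
        · exact hnv (hwB v h')
      have hxadjall : ∀ v ∈ B, G.Adj x v := by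
        intro v hv
        exact hCcl x hx v (hBsub hv) (fun h => hxB (h ▸ hv))
      obtain ⟨a₀, ha₀⟩ := Finset.card_pos.1 (by omega : 0 < B.card)
      by_cases hY : ∃ K₀ : Finset V, ∃ y z : V, K₀.card = n ∧ (∀ v ∈ K₀, red v) ∧
          (∀ u ∈ K₀, ∀ v ∈ K₀, u ≠ v → G.Adj u v) ∧ ¬ red y ∧ ¬ red z ∧ G.Adj y z ∧
          (∀ v ∈ K₀, G.Adj y v) ∧ (∀ v ∈ K₀, G.Adj z v)
      · -- CASE I : some (n)-clique with two adjacent common blue neighbors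
        obtain ⟨K₀, y, z, hKcard, hKred, hKcl, hyb, hzb, hyz, hyK, hzK⟩ := hY
        obtain ⟨a₁, ha₁⟩ := Finset.card_pos.1 (by omega : 0 < K₀.card)
        obtain ⟨ψ₁, hcol₁, hψa, hψy, hψz⟩ :=
          aux_conj_triangle hUH rd1 bd1 bd2 a₁ y z hrd1 (hKred a₁ ha₁) hbd1 hbd2 hyb hzb
            hD13 hD14 hD34 (hyK a₁ ha₁).symm (hzK a₁ ha₁).symm hyz
        set u := ψ₁ rd2 with hu
        have hured : red u := (hcol₁ rd2).2 hrd2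
        have hua₁ : G.Adj u a₁ := by rw [hu, ← hψa]; exact ψ₁.map_adj_iff.2 hD12.symm
        have huy : G.Adj u y := by rw [hu, ← hψy]; exact ψ₁.map_adj_iff.2 hD23
        have hunz : ¬ G.Adj u z := by
          rw [hu, ← hψz]
          intro h
          exact hD24 (ψ₁.map_adj_iff.1 h)
        have huK : ∀ v ∈ K₀, G.Adj u v := by
          intro v hv
          by_cases h : v = a₁
          · subst h; exact hua₁
          · refine hRtrans hured (hKred a₁ ha₁) (hKred v hv) hua₁
              (hKcl a₁ ha₁ v hv (fun hh => h hh.symm)) ?_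
            intro hh
            apply hunz
            rw [hh]
            exact (hzK v hv).symm
        have huK0 : u ∉ K₀ := fun h => hunz (hzK u h).symm
        obtain ⟨ψ₂, hcol₂, hz₂, -, hM₂, hQonto₂, -⟩ :=
          aux_conj_blocks hUH K₀ {u} B {x} z w
            (by intro v hv
                rcases Finset.mem_union.1 hv with h | h
                · exact hKred v h
                · simp only [Finset.mem_singleton] at h; rw [h]; exact hured)
            (by intro v hv
                rcases Finset.mem_union.1 hv with h | h
                · exact hBred v h
                · simp only [Finset.mem_singleton] at h; rw [h]; exact hCred x hx)
            (by intro u' hu' v hv hne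
                rcases Finset.mem_union.1 hu' with h1 | h1 <;>
                  rcases Finset.mem_union.1 hv with h2 | h2
                · exact hKcl u' h1 v h2 hne
                · simp only [Finset.mem_singleton] at h2; rw [h2]; exact (huK u' h1).symm
                · simp only [Finset.mem_singleton] at h1; rw [h1]; exact huK v h2
                · simp only [Finset.mem_singleton] at h1 h2
                  exact absurd (h1.trans h2.symm) hne)
            (by intro u' hu' v hv hne
                rcases Finset.mem_union.1 hu' with h1 | h1 <;>
                  rcases Finset.mem_union.1 hv with h2 | h2
                · exact hBcl u' h1 v h2 hne
                · simp only [Finset.mem_singleton] at h2; rw [h2]; exact (hxadjall u' h1).symm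
                · simp only [Finset.mem_singleton] at h1; rw [h1]; exact hxadjall v h2
                · simp only [Finset.mem_singleton] at h1 h2
                  exact absurd (h1.trans h2.symm) hne)
            (Finset.disjoint_singleton_right.2 huK0)
            (Finset.disjoint_singleton_right.2 hxB)
            hzb hwb hzK
            (by intro v hv; simp only [Finset.mem_singleton] at hv; rw [hv]
                exact fun h => hunz h.symm)
            hwB
            (by intro v hv; simp only [Finset.mem_singleton] at hv; rw [hv]; exact hwx)
            (hKcard.trans hBcard.symm) (by simp)
        set q := ψ₂ y with hq
        have hqb : ¬ red q := fun h => hyb ((hcol₂ y).1 h)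
        have hqw : G.Adj q w := by rw [hq, ← hz₂]; exact ψ₂.map_adj_iff.2 hyz
        have hψ₂u : ψ₂ u = x := by
          have := hM₂ u (Finset.mem_singleton_self u)
          simpa using this
        have hqC : ∀ v ∈ C, G.Adj q v := by
          intro v hv
          rcases (hmemC v).1 hv with h | h
          · subst h
            rw [hq, ← hψ₂u]
            exact ψ₂.map_adj_iff.2 huy.symm
          · obtain ⟨v', hv', he⟩ := hQonto₂ v h
            rw [hq, ← he]
            exact ψ₂.map_adj_iff.2 (hyK v' hv')
        rcases hstar q hqb hqC with h | h
        · rw [h] at hqw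
          exact hwnadj hqw.symm
        · exact hwnadj (hBtrans hwb hqb hb hqw.symm h hwne)
      · -- CASE II : no n-clique has two adjacent common blue neighbors
        -- (2b) b is the unique common blue neighbor of C
        have hfullsC : ∀ q, ¬ red q → (∀ v ∈ C, G.Adj q v) → q = b := by
          intro q hq hfull
          rcases hstar q hq hfull with h | h
          · exact h
          · exfalso
            exact hY ⟨B, b, q, hBcard, hBred, hBcl, hb, hq, h.symm, hbB,
              fun v hv => hfull v (hBsub hv)⟩
        -- (2c) every (n+1)-red-clique has a common blue neighbor, and it is unique
        have hFullEx : ∀ K : Finset V, K.card = n + 1 → (∀ v ∈ K, red v) →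
            (∀ u ∈ K, ∀ v ∈ K, u ≠ v → G.Adj u v) →
            ∃ g, ¬ red g ∧ ∀ v ∈ K, G.Adj g v := by
          intro K hKcard hKred hKcl
          obtain ⟨ψ, hcol, hmap, honto⟩ :=
            aux_conj_cliques hUH C K hCred hKred hCcl hKcl (by rw [hk, hKcard])
          refine ⟨ψ b, fun h => hb ((hcol b).1 h), ?_⟩
          intro v hv
          obtain ⟨v2, hv2, he⟩ := honto v hv
          rw [← he]
          exact ψ.map_adj_iff.2 (hbC v2 hv2)
        have hFullUniq : ∀ K : Finset V, K.card = n + 1 → (∀ v ∈ K, red v) →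
            (∀ u ∈ K, ∀ v ∈ K, u ≠ v → G.Adj u v) →
            ∀ g g2, ¬ red g → ¬ red g2 → (∀ v ∈ K, G.Adj g v) → (∀ v ∈ K, G.Adj g2 v) →
            g = g2 := by
          intro K hKcard hKred hKcl g g2 hg hg2 hgK hg2K
          by_contra hne
          by_cases hadj : G.Adj g g2
          · apply hY
            obtain ⟨pt, hpt⟩ := Finset.card_pos.1 (by omega : 0 < K.card)
            refine ⟨K.erase pt, g, g2, ?_, ?_, ?_, hg, hg2, hadj, ?_, ?_⟩
            · rw [Finset.card_erase_of_mem hpt, hKcard]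
              omega
            · exact fun v hv => hKred v (Finset.erase_subset _ _ hv)
            · exact fun u hu v hv h =>
                hKcl u (Finset.erase_subset _ _ hu) v (Finset.erase_subset _ _ hv) h
            · exact fun v hv => hgK v (Finset.erase_subset _ _ hv)
            · exact fun v hv => hg2K v (Finset.erase_subset _ _ hv)
          · obtain ⟨ψ, hcol, hz, -, -, honto, -⟩ :=
              aux_conj_blocks hUH K ∅ C ∅ g b (by simpa using hKred) (by simpa using hCred)
                (by simpa using hKcl) (by simpa using hCcl) (by simp) (by simp) hg hb
                hgK (by simp) hbC (by simp) (by rw [hKcard, hk]) rfl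
            have hq2 : ∀ v ∈ C, G.Adj (ψ g2) v := by
              intro v hv
              obtain ⟨v2, hv2, he⟩ := honto v hv
              rw [← he]
              exact ψ.map_adj_iff.2 (hg2K v2 hv2)
            have heq := hfullsC (ψ g2) (fun h => hg2 ((hcol g2).1 h)) hq2
            apply hne
            apply ψ.injective
            rw [hz, heq]
        -- (2d) construct x₂, a red vertex fully adjacent to B and to w but not b
        obtain ⟨ψ₃, hcol₃, hz₃, -, -, honto₃, -⟩ :=
          aux_conj_blocks hUH B ∅ B ∅ b w (by simpa using hBred) (by simpa using hBred)
            (by simpa using hBcl) (by simpa using hBcl) (by simp) (by simp) hb hwb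
            hbB (by simp) hwB (by simp) rfl rfl
        set x₂ := ψ₃ x with hx₂def
        have hx₂red : red x₂ := (hcol₃ x).2 (hCred x hx)
        have hx₂B : ∀ v ∈ B, G.Adj x₂ v := by
          intro v hv
          obtain ⟨v2, hv2, he⟩ := honto₃ v hv
          rw [hx₂def, ← he]
          exact ψ₃.map_adj_iff.2 (hCcl x hx v2 (hBsub hv2) (fun h => hxB (h ▸ hv2)))
        have hx₂w : G.Adj x₂ w := by
          rw [hx₂def, ← hz₃]
          exact ψ₃.map_adj_iff.2 (hbC x hx).symm
        have hx₂notB : x₂ ∉ B := by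
          intro h
          obtain ⟨v2, hv2, he⟩ := honto₃ x₂ h
          have hveq : v2 = x := ψ₃.injective (he.trans hx₂def)
          rw [hveq] at hv2
          exact hxB hv2
        have hx₂x : x₂ ≠ x := by
          intro h
          rw [h] at hx₂w
          exact hwx hx₂w.symm
        have hxx₂ : G.Adj x x₂ := by
          refine hRtrans (hCred x hx) (hBred a₀ ha₀) hx₂red ?_ ?_ (fun h => hx₂x h.symm)
          · exact hCcl x hx a₀ (hBsub ha₀) (fun h => hxB (h ▸ ha₀))
          · exact (hx₂B a₀ ha₀).symm
        have hbx₂ : ¬ G.Adj b x₂ := by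
          intro h
          have hKcl2 : ∀ u ∈ insert x₂ B, ∀ v ∈ insert x₂ B, u ≠ v → G.Adj u v := by
            intro u hu v hv hne
            rcases Finset.mem_insert.1 hu with h1 | h1 <;>
              rcases Finset.mem_insert.1 hv with h2 | h2
            · exact absurd (h1.trans h2.symm) hne
            · rw [h1]; exact hx₂B v h2
            · rw [h2]; exact (hx₂B u h1).symm
            · exact hBcl u h1 v h2 hne
          have hKred2 : ∀ v ∈ insert x₂ B, red v := by
            intro v hv
            rcases Finset.mem_insert.1 hv with h1 | h1
            · rw [h1]; exact hx₂red
            · exact hBred v h1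
          have hKcard2 : (insert x₂ B).card = n + 1 := by
            rw [Finset.card_insert_of_notMem hx₂notB, hBcard]
          have heq := hFullUniq (insert x₂ B) hKcard2 hKred2 hKcl2 b w hb hwb
            (by intro v hv
                rcases Finset.mem_insert.1 hv with h1 | h1
                · rw [h1]; exact h
                · exact hbB v h1)
            (by intro v hv
                rcases Finset.mem_insert.1 hv with h1 | h1
                · rw [h1]; exact hx₂w.symm
                · exact hwB v h1)
          exact hwne heq.symm
        -- (2e) no (n+2)-red-clique has a common blue neighbor
        have hx₂C : x₂ ∉ C := by
          intro h
          rcases (hmemC x₂).1 h with h1 | h1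
          · exact hx₂x h1
          · exact hx₂notB h1
        have hNoBig : ∀ P : Finset V, P.card = n + 2 → (∀ v ∈ P, red v) →
            (∀ u ∈ P, ∀ v ∈ P, u ≠ v → G.Adj u v) →
            ∀ g, ¬ red g → ¬ (∀ v ∈ P, G.Adj g v) := by
          have hP0red : ∀ v ∈ insert x₂ C, red v := by
            intro v hv
            rcases Finset.mem_insert.1 hv with h1 | h1
            · rw [h1]; exact hx₂red
            · exact hCred v h1
          have hP0cl : ∀ u ∈ insert x₂ C, ∀ v ∈ insert x₂ C, u ≠ v → G.Adj u v := by
            intro u hu v hv hne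
            rcases Finset.mem_insert.1 hu with h1 | h1 <;>
              rcases Finset.mem_insert.1 hv with h2 | h2
            · exact absurd (h1.trans h2.symm) hne
            · rw [h1]
              rcases (hmemC v).1 h2 with h3 | h3
              · rw [h3]; exact hxx₂.symm
              · exact hx₂B v h3
            · rw [h2]
              rcases (hmemC u).1 h1 with h3 | h3
              · rw [h3]; exact hxx₂
              · exact (hx₂B u h3).symm
            · exact hCcl u h1 v h2 hne
          have hP0card : (insert x₂ C).card = n + 2 := by
            rw [Finset.card_insert_of_notMem hx₂C, hk]
          intro P hPcard hPred hPcl g hg hgP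
          obtain ⟨ψ, hcol, hmap, honto⟩ :=
            aux_conj_cliques hUH P (insert x₂ C) hPred hP0red hPcl hP0cl
              (by rw [hPcard, hP0card])
          have hfull : ∀ v ∈ insert x₂ C, G.Adj (ψ g) v := by
            intro v hv
            obtain ⟨v2, hv2, he⟩ := honto v hv
            rw [← he]
            exact ψ.map_adj_iff.2 (hgP v2 hv2)
          have hgb : ψ g = b := hfullsC (ψ g) (fun h => hg ((hcol g).1 h))
            (fun v hv => hfull v (Finset.mem_insert_of_mem hv))
          rw [hgb] at hfull
          exact hbx₂ (hfull x₂ (Finset.mem_insert_self _ _))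
        -- (2f) the "T-set" of an adjacent red-blue pair
        have hTset : ∀ a q, red a → ¬ red q → G.Adj q a →
            ∃ T : Finset V, T.card = n + 1 ∧ a ∈ T ∧ (∀ v ∈ T, red v) ∧
              (∀ u ∈ T, ∀ v ∈ T, u ≠ v → G.Adj u v) ∧ (∀ v ∈ T, G.Adj q v) ∧
              (∀ v ∈ T, v = a ∨ G.Adj v a) ∧
              (∀ v, red v → G.Adj q v → (v = a ∨ G.Adj v a) → v ∈ T) := by
          intro a q hra hbq hqa
          set ST : Set V := {v | red v ∧ G.Adj q v ∧ (v = a ∨ G.Adj v a)} with hSTdef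
          have hSTmem : ∀ v, v ∈ ST ↔ red v ∧ G.Adj q v ∧ (v = a ∨ G.Adj v a) := by
            intro v; rw [hSTdef]; rfl
          have hSTcl : ∀ u ∈ ST, ∀ v ∈ ST, u ≠ v → G.Adj u v := by
            intro u hu v hv hne
            obtain ⟨hur, -, hua⟩ := (hSTmem u).1 hu
            obtain ⟨hvr, -, hva⟩ := (hSTmem v).1 hv
            rcases hua with h1 | h1
            · rcases hva with h2 | h2
              · exact absurd (h1.trans h2.symm) hne
              · rw [h1]; exact h2.symm
            · rcases hva with h2 | h2
              · rw [h2]; exact h1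
              · exact hRtrans hur hra hvr h1 h2.symm hne
          have hbound : ∀ F : Finset V, ↑F ⊆ ST → F.card ≤ n + 1 := by
            intro F hF
            by_contra hgt
            push_neg at hgt
            obtain ⟨F2, hF2sub, hF2card⟩ :=
              Finset.exists_subset_card_eq (by omega : n + 2 ≤ F.card)
            refine hNoBig F2 hF2card ?_ ?_ q hbq ?_
            · exact fun v hv => ((hSTmem v).1 (hF (hF2sub hv))).1
            · intro u hu v hv hne
              exact hSTcl u (hF (hF2sub hu)) v (hF (hF2sub hv)) hne
            · exact fun v hv => ((hSTmem v).1 (hF (hF2sub hv))).2.1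
          have hfin : ST.Finite := by
            by_contra hinf
            have hinf2 : ST.Infinite := hinf
            obtain ⟨F, hFsub, hFcard⟩ := hinf2.exists_subset_card_eq (n + 2)
            have := hbound F hFsub
            omega
          obtain ⟨ψ₄, hcol₄, hz₄, hmap₄, -, -, -⟩ :=
            aux_conj_blocks hUH {x} ∅ {a} ∅ b q
              (by intro v hv; simp only [Finset.union_empty, Finset.mem_singleton] at hv
                  rw [hv]; exact hCred x hx)
              (by intro v hv; simp only [Finset.union_empty, Finset.mem_singleton] at hv
                  rw [hv]; exact hra)
              (by intro u hu v hv hne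
                  simp only [Finset.union_empty, Finset.mem_singleton] at hu hv
                  exact absurd (hu.trans hv.symm) hne)
              (by intro u hu v hv hne
                  simp only [Finset.union_empty, Finset.mem_singleton] at hu hv
                  exact absurd (hu.trans hv.symm) hne)
              (by simp) (by simp) hb hbq
              (by intro v hv; simp only [Finset.mem_singleton] at hv; rw [hv]; exact hbC x hx)
              (by simp)
              (by intro v hv; simp only [Finset.mem_singleton] at hv; rw [hv]; exact hqa)
              (by simp) rfl rfl
          have hψ₄x : ψ₄ x = a := by simpa using hmap₄ x (Finset.mem_singleton_self x)
          have himg : C.image ψ₄ ⊆ hfin.toFinset := by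
            intro v hv
            obtain ⟨v2, hv2, he⟩ := Finset.mem_image.1 hv
            rw [Set.Finite.mem_toFinset, hSTmem]
            refine ⟨?_, ?_, ?_⟩
            · rw [← he]; exact (hcol₄ v2).2 (hCred v2 hv2)
            · rw [← he, ← hz₄]; exact ψ₄.map_adj_iff.2 (hbC v2 hv2)
            · by_cases h : v2 = x
              · left; rw [← he, h]; exact hψ₄x
              · right; rw [← he, ← hψ₄x]
                exact ψ₄.map_adj_iff.2 (hCcl v2 hv2 x hx h)
          have hcardlow : n + 1 ≤ hfin.toFinset.card := by
            calc n + 1 = (C.image ψ₄).card := by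
                  rw [Finset.card_image_of_injective _ ψ₄.injective, hk]
              _ ≤ _ := Finset.card_le_card himg
          have hsubST : ↑hfin.toFinset ⊆ ST := by
            rw [Set.Finite.coe_toFinset]
          have hcardT : hfin.toFinset.card = n + 1 :=
            le_antisymm (hbound _ hsubST) hcardlow
          refine ⟨hfin.toFinset, hcardT, ?_, ?_, ?_, ?_, ?_, ?_⟩
          · rw [Set.Finite.mem_toFinset, hSTmem]; exact ⟨hra, hqa, Or.inl rfl⟩
          · intro v hv; rw [Set.Finite.mem_toFinset, hSTmem] at hv; exact hv.1
          · intro u hu v hv hne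
            rw [Set.Finite.mem_toFinset] at hu hv
            exact hSTcl u hu v hv hne
          · intro v hv; rw [Set.Finite.mem_toFinset, hSTmem] at hv; exact hv.2.1
          · intro v hv; rw [Set.Finite.mem_toFinset, hSTmem] at hv; exact hv.2.2
          · intro v h1 h2 h3; rw [Set.Finite.mem_toFinset, hSTmem]; exact ⟨h1, h2, h3⟩
        -- (2g) the two T-sets of the D copy
        obtain ⟨T1, hT1card, hT1a, hT1red, hT1cl, hT1adj, hT1rd, hT1closed⟩ :=
          hTset rd1 bd1 hrd1 hbd1 hD13.symm
        obtain ⟨T2, hT2card, hT2a, hT2red, hT2cl, hT2adj, hT2rd, hT2closed⟩ :=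
          hTset rd1 bd2 hrd1 hbd2 hD14.symm
        set Qs := T1 ∩ T2 with hQsdef
        set c := Qs.card with hcdef
        have hcpos : 1 ≤ c := by
          rw [hcdef, hQsdef]
          exact Finset.card_pos.2 ⟨rd1, Finset.mem_inter.2 ⟨hT1a, hT2a⟩⟩
        have hcn : c + 1 ≤ n := by
          by_contra hcc
          push_neg at hcc
          obtain ⟨Q2, hQ2sub, hQ2card⟩ :=
            Finset.exists_subset_card_eq (by omega : n ≤ Qs.card)
          apply hY
          refine ⟨Q2, bd1, bd2, hQ2card, ?_, ?_, hbd1, hbd2, hD34, ?_, ?_⟩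
          · exact fun v hv => hT1red v (Finset.mem_inter.1 (hQ2sub hv)).1
          · exact fun u hu v hv h => hT1cl u (Finset.mem_inter.1 (hQ2sub hu)).1 v
              (Finset.mem_inter.1 (hQ2sub hv)).1 h
          · exact fun v hv => hT1adj v (Finset.mem_inter.1 (hQ2sub hv)).1
          · exact fun v hv => hT2adj v (Finset.mem_inter.1 (hQ2sub hv)).2
        have hQsT1 : Qs ⊆ T1 := Finset.inter_subset_left
        have hbd2Qs : ∀ v ∈ Qs, G.Adj bd2 v := fun v hv => hT2adj v (Finset.mem_inter.1 hv).2
        have hbd2M : ∀ v ∈ T1 \ Qs, ¬ G.Adj bd2 v := by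
          intro v hv hadj
          obtain ⟨hvT1, hvQs⟩ := Finset.mem_sdiff.1 hv
          apply hvQs
          rw [hQsdef]
          exact Finset.mem_inter.2 ⟨hvT1, hT2closed v (hT1red v hvT1) hadj (hT1rd v hvT1)⟩
        -- (2h) a fresh red clique E outside C, attached to a₀
        obtain ⟨ψ₅, hcol₅, hz₅, hmap₅, -, -, -⟩ :=
          aux_conj_blocks hUH {rd1} ∅ {a₀} ∅ bd1 b
            (by intro v hv; simp only [Finset.union_empty, Finset.mem_singleton] at hv
                rw [hv]; exact hrd1)
            (by intro v hv; simp only [Finset.union_empty, Finset.mem_singleton] at hv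
                rw [hv]; exact hBred a₀ ha₀)
            (by intro u hu v hv hne
                simp only [Finset.union_empty, Finset.mem_singleton] at hu hv
                exact absurd (hu.trans hv.symm) hne)
            (by intro u hu v hv hne
                simp only [Finset.union_empty, Finset.mem_singleton] at hu hv
                exact absurd (hu.trans hv.symm) hne)
            (by simp) (by simp) hbd1 hb
            (by intro v hv; simp only [Finset.mem_singleton] at hv; rw [hv]; exact hD13.symm)
            (by simp)
            (by intro v hv; simp only [Finset.mem_singleton] at hv; rw [hv]; exact hbB a₀ ha₀)
            (by simp) rfl rfl
        have hψ₅rd1 : ψ₅ rd1 = a₀ := by simpa using hmap₅ rd1 (Finset.mem_singleton_self rd1)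
        set W := (T1 ∪ T2).image ψ₅ with hWdef
        have hWcard : W.card = (n + 1) + (n + 1) - c := by
          rw [hWdef, Finset.card_image_of_injective _ ψ₅.injective]
          have hcui := Finset.card_union_add_card_inter T1 T2
          rw [hT1card, hT2card, ← hQsdef, ← hcdef] at hcui
          omega
        have hWprop : ∀ u ∈ W, red u ∧ (u = a₀ ∨ G.Adj u a₀) := by
          intro u hu
          obtain ⟨v2, hv2, he⟩ := Finset.mem_image.1 hu
          have hvred : red v2 := by
            rcases Finset.mem_union.1 hv2 with h | h
            exacts [hT1red v2 h, hT2red v2 h]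
          have hvrd : v2 = rd1 ∨ G.Adj v2 rd1 := by
            rcases Finset.mem_union.1 hv2 with h | h
            exacts [hT1rd v2 h, hT2rd v2 h]
          constructor
          · rw [← he]; exact (hcol₅ v2).2 hvred
          · rcases hvrd with h | h
            · left; rw [← he, h]; exact hψ₅rd1
            · right; rw [← he, ← hψ₅rd1]; exact ψ₅.map_adj_iff.2 h
        have hWCE : (n + 1) - c ≤ (W \ C).card := by
          have h1 : W.card ≤ (W \ C).card + C.card := Finset.card_le_card_sdiff_add_card
          rw [hWcard, hk] at h1
          omega
        obtain ⟨E, hEsub, hEcard⟩ := Finset.exists_subset_card_eq hWCE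
        have hEprop : ∀ e ∈ E, red e ∧ e ∉ C ∧ G.Adj e a₀ := by
          intro e he
          obtain ⟨hW, hnC⟩ := Finset.mem_sdiff.1 (hEsub he)
          obtain ⟨hr, hrd⟩ := hWprop e hW
          refine ⟨hr, hnC, ?_⟩
          rcases hrd with h | h
          · exact absurd (show e ∈ C by rw [h]; exact hBsub ha₀) hnC
          · exact h
        have hEC : ∀ e ∈ E, e ∉ C := fun e he => (hEprop e he).2.1
        have hCEred : ∀ p ∈ C ∪ E, red p := by
          intro p hp
          rcases Finset.mem_union.1 hp with h | h
          exacts [hCred p h, (hEprop p h).1]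
        have hCEcl : ∀ u ∈ C ∪ E, ∀ v ∈ C ∪ E, u ≠ v → G.Adj u v := by
          intro u hu v hv hne
          have keya : ∀ p, p ∈ C ∪ E → p = a₀ ∨ G.Adj p a₀ := by
            intro p hp
            rcases Finset.mem_union.1 hp with h | h
            · by_cases hpa : p = a₀
              · exact Or.inl hpa
              · exact Or.inr (hCcl p h a₀ (hBsub ha₀) hpa)
            · exact Or.inr (hEprop p h).2.2
          rcases keya u hu with h1 | h1
          · rcases keya v hv with h2 | h2
            · exact absurd (h1.trans h2.symm) hne
            · rw [h1]; exact h2.symm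
          · rcases keya v hv with h2 | h2
            · rw [h2]; exact h1
            · exact hRtrans (hCEred u hu) (hBred a₀ ha₀) (hCEred v hv) h1 h2.symm hne
        -- (2i) the two target cliques
        obtain ⟨Q, hQsub, hQcard⟩ := Finset.exists_subset_card_eq (by omega : c ≤ C.card)
        obtain ⟨α, hα⟩ := Finset.card_pos.1 (by omega : 0 < Q.card)
        obtain ⟨β, hβ⟩ := Finset.card_pos.1
          (by rw [Finset.card_sdiff_of_subset hQsub, hk, hQcard]; omega : 0 < (C \ Q).card)
        obtain ⟨hβC, hβQ⟩ := Finset.mem_sdiff.1 hβ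
        set Q2 := insert β (Q.erase α) with hQ2def
        have hQ2card : Q2.card = c := by
          rw [hQ2def, Finset.card_insert_of_notMem (fun h => hβQ (Finset.erase_subset _ _ h)),
            Finset.card_erase_of_mem hα, hQcard]
          omega
        have hQ2sub : Q2 ⊆ C := by
          intro v hv
          rcases Finset.mem_insert.1 hv with h | h
          · rw [h]; exact hβC
          · exact hQsub (Finset.erase_subset _ _ h)
        have hdisjQE : Disjoint Q E :=
          Finset.disjoint_left.2 (fun p hp hpe => hEC p hpe (hQsub hp))
        have hdisjQ2E : Disjoint Q2 E :=
          Finset.disjoint_left.2 (fun p hp hpe => hEC p hpe (hQ2sub hp))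
        have hK1card : (Q ∪ E).card = n + 1 := by
          rw [Finset.card_union_of_disjoint hdisjQE, hQcard, hEcard]
          omega
        have hK2card : (Q2 ∪ E).card = n + 1 := by
          rw [Finset.card_union_of_disjoint hdisjQ2E, hQ2card, hEcard]
          omega
        have hK1sub : Q ∪ E ⊆ C ∪ E := Finset.union_subset_union hQsub subset_rfl
        have hK2sub : Q2 ∪ E ⊆ C ∪ E := Finset.union_subset_union hQ2sub subset_rfl
        obtain ⟨g1, hg1b, hg1K⟩ := hFullEx (Q ∪ E) hK1card
          (fun v hv => hCEred v (hK1sub hv))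
          (fun u hu v hv h => hCEcl u (hK1sub hu) v (hK1sub hv) h)
        obtain ⟨g2, hg2b, hg2K⟩ := hFullEx (Q2 ∪ E) hK2card
          (fun v hv => hCEred v (hK2sub hv))
          (fun u hu v hv h => hCEcl u (hK2sub hu) v (hK2sub hv) h)
        -- the union is an (n+2)-clique, so g1 ≠ g2
        have hK12 : (Q ∪ E) ∪ (Q2 ∪ E) = (insert β Q) ∪ E := by
          ext u
          simp only [Finset.mem_union, Finset.mem_insert, hQ2def, Finset.mem_erase]
          constructor
          · rintro ((h | h) | (h | h))
            · exact Or.inl (Or.inr h)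
            · exact Or.inr h
            · rcases h with h | h
              · exact Or.inl (Or.inl h)
              · exact Or.inl (Or.inr h.2)
            · exact Or.inr h
          · rintro ((h | h) | h)
            · exact Or.inr (Or.inl (Or.inl h))
            · exact Or.inl (Or.inl h)
            · exact Or.inl (Or.inr h)
        have hβQE : β ∉ Q ∪ E := by
          intro h
          rcases Finset.mem_union.1 h with h | h
          · exact hβQ h
          · exact hEC β h hβC
        have hK12card : ((Q ∪ E) ∪ (Q2 ∪ E)).card = n + 2 := by
          rw [hK12]
          have : insert β Q ∪ E = insert β (Q ∪ E) := by
            ext u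
            simp only [Finset.mem_union, Finset.mem_insert]
            tauto
          rw [this, Finset.card_insert_of_notMem hβQE, hK1card]
        have hK12sub : (Q ∪ E) ∪ (Q2 ∪ E) ⊆ C ∪ E :=
          Finset.union_subset hK1sub hK2sub
        have hg12ne : g1 ≠ g2 := by
          intro h
          refine hNoBig ((Q ∪ E) ∪ (Q2 ∪ E)) hK12card
            (fun v hv => hCEred v (hK12sub hv))
            (fun u hu v hv hne => hCEcl u (hK12sub hu) v (hK12sub hv) hne) g1 hg1b ?_
          intro v hv
          rcases Finset.mem_union.1 hv with h1 | h1
          · exact hg1K v h1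
          · rw [h]; exact hg2K v h1
        have hg12nadj : ¬ G.Adj g1 g2 := by
          intro hadj
          obtain ⟨e₁, he₁⟩ := Finset.card_pos.1 (by omega : 0 < E.card)
          have he₁CE : e₁ ∈ C ∪ E := Finset.mem_union_right _ he₁
          obtain ⟨ψ₆, hcol₆, hψe, hψg1, hψg2⟩ :=
            aux_conj_triangle hUH e₁ g1 g2 rd1 bd1 bd2 (hEprop e₁ he₁).1 hrd1 hg1b hg2b
              hbd1 hbd2 (hg1K e₁ (Finset.mem_union_right _ he₁)).symm
              (hg2K e₁ (Finset.mem_union_right _ he₁)).symm hadj hD13 hD14 hD34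
          have himg6 : ∀ v ∈ (Q ∪ E) ∩ (Q2 ∪ E), ψ₆ v ∈ Qs := by
            intro v hv
            obtain ⟨hv1, hv2⟩ := Finset.mem_inter.1 hv
            have hvred : red v := hCEred v (hK1sub hv1)
            have h1 : G.Adj bd1 (ψ₆ v) := by
              rw [← hψg1]; exact ψ₆.map_adj_iff.2 (hg1K v hv1)
            have h2 : G.Adj bd2 (ψ₆ v) := by
              rw [← hψg2]; exact ψ₆.map_adj_iff.2 (hg2K v hv2)
            have h3 : ψ₆ v = rd1 ∨ G.Adj (ψ₆ v) rd1 := by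
              by_cases h : v = e₁
              · left; rw [h]; exact hψe
              · right; rw [← hψe]
                exact ψ₆.map_adj_iff.2 (hCEcl v (hK1sub hv1) e₁ he₁CE h)
            rw [hQsdef]
            exact Finset.mem_inter.2 ⟨hT1closed _ ((hcol₆ v).2 hvred) h1 h3,
              hT2closed _ ((hcol₆ v).2 hvred) h2 h3⟩
          have hKKeq : (Q ∪ E) ∩ (Q2 ∪ E) = (Q.erase α) ∪ E := by
            ext u
            simp only [Finset.mem_inter, Finset.mem_union, hQ2def, Finset.mem_insert,
              Finset.mem_erase]
            constructor
            · rintro ⟨h1 | h1, (h2 | h2) | h2⟩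
              · exact absurd (h2 ▸ h1) hβQ
              · exact Or.inl h2
              · exact Or.inr h2
              · exact Or.inr h1
              · exact Or.inr h1
              · exact Or.inr h1
            · rintro (⟨h1, h2⟩ | h)
              · exact ⟨Or.inl h2, Or.inl (Or.inr ⟨h1, h2⟩)⟩
              · exact ⟨Or.inr h, Or.inr h⟩
          have hdisjαE : Disjoint (Q.erase α) E :=
            Finset.disjoint_left.2
              (fun p hp hpe => hEC p hpe (hQsub (Finset.erase_subset _ _ hp)))
          have hKKcard : ((Q ∪ E) ∩ (Q2 ∪ E)).card = n := by
            rw [hKKeq, Finset.card_union_of_disjoint hdisjαE,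
              Finset.card_erase_of_mem hα, hQcard, hEcard]
            omega
          have hle : ((Q ∪ E) ∩ (Q2 ∪ E)).card ≤ Qs.card := by
            rw [← Finset.card_image_of_injective ((Q ∪ E) ∩ (Q2 ∪ E)) ψ₆.injective]
            apply Finset.card_le_card
            intro u hu
            obtain ⟨v2, hv2, he⟩ := Finset.mem_image.1 hu
            rw [← he]
            exact himg6 v2 hv2
          have hn2 : n ≤ c := by
            rw [hcdef]
            calc n = ((Q ∪ E) ∩ (Q2 ∪ E)).card := hKKcard.symm
              _ ≤ Qs.card := hle
          omega
        have hbg : ¬ G.Adj b g1 ∨ ¬ G.Adj b g2 := by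
          by_contra h
          push_neg at h
          exact hg12nadj (hBtrans hg1b hb hg2b h.1.symm h.2 hg12ne)
        -- (2j) the final contradiction
        have final : ∀ (QQ : Finset V) g₀, QQ ⊆ C → QQ.card = c → ¬ red g₀ →
            (∀ v ∈ QQ ∪ E, G.Adj g₀ v) → ¬ G.Adj b g₀ → False := by
          intro QQ g₀ hQQsub hQQcard hg₀b hg₀full hbg₀
          have hdisjQQE : Disjoint QQ E :=
            Finset.disjoint_left.2 (fun p hp hpe => hEC p hpe (hQQsub hp))
          have hQQEcard : (QQ ∪ E).card = n + 1 := by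
            rw [Finset.card_union_of_disjoint hdisjQQE, hQQcard, hEcard]
            omega
          have hQQEsub : QQ ∪ E ⊆ C ∪ E := Finset.union_subset_union hQQsub subset_rfl
          obtain ⟨a₂, ha₂⟩ := Finset.card_pos.1 (by omega : 0 < QQ.card)
          obtain ⟨T, hTcard, hTa, hTred, hTcl, hTadj, hTrd, hTclosed⟩ :=
            hTset a₂ g₀ (hCred a₂ (hQQsub ha₂)) hg₀b
              (hg₀full a₂ (Finset.mem_union_left _ ha₂))
          have hKT : QQ ∪ E ⊆ T := by
            intro v hv
            apply hTclosed
            · exact hCEred v (hQQEsub hv)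
            · exact hg₀full v hv
            · by_cases h : v = a₂
              · exact Or.inl h
              · exact Or.inr (hCEcl v (hQQEsub hv) a₂
                  (Finset.mem_union_left _ (hQQsub ha₂)) h)
          have hTeq : QQ ∪ E = T :=
            Finset.eq_of_subset_of_card_le hKT (by rw [hTcard, hQQEcard])
          have hmiss : ∀ v ∈ C, G.Adj g₀ v → v ∈ QQ := by
            intro v hv hadj
            have hvT : v ∈ T := by
              apply hTclosed v (hCred v hv) hadj
              by_cases h : v = a₂
              · exact Or.inl h
              · exact Or.inr (hCcl v hv a₂ (hQQsub ha₂) h)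
            rw [← hTeq] at hvT
            rcases Finset.mem_union.1 hvT with h | h
            · exact h
            · exact absurd hv (hEC v h)
          obtain ⟨ψ₇, hcol₇, hz₇, -, -, hQonto₇, hMonto₇⟩ :=
            aux_conj_blocks hUH Qs (T1 \ Qs) QQ (C \ QQ) bd2 g₀
              (by intro v hv
                  have hvt : v ∈ T1 := by
                    rcases Finset.mem_union.1 hv with h | h
                    exacts [hQsT1 h, (Finset.mem_sdiff.1 h).1]
                  exact hT1red v hvt)
              (by intro v hv
                  have hvc : v ∈ C := by
                    rcases Finset.mem_union.1 hv with h | h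
                    exacts [hQQsub h, (Finset.mem_sdiff.1 h).1]
                  exact hCred v hvc)
              (by intro u hu v hv hne
                  have hut : u ∈ T1 := by
                    rcases Finset.mem_union.1 hu with h | h
                    exacts [hQsT1 h, (Finset.mem_sdiff.1 h).1]
                  have hvt : v ∈ T1 := by
                    rcases Finset.mem_union.1 hv with h | h
                    exacts [hQsT1 h, (Finset.mem_sdiff.1 h).1]
                  exact hT1cl u hut v hvt hne)
              (by intro u hu v hv hne
                  have huc : u ∈ C := by
                    rcases Finset.mem_union.1 hu with h | h
                    exacts [hQQsub h, (Finset.mem_sdiff.1 h).1]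
                  have hvc : v ∈ C := by
                    rcases Finset.mem_union.1 hv with h | h
                    exacts [hQQsub h, (Finset.mem_sdiff.1 h).1]
                  exact hCcl u huc v hvc hne)
              Finset.disjoint_sdiff Finset.disjoint_sdiff
              hbd2 hg₀b hbd2Qs hbd2M
              (fun v hv => hg₀full v (Finset.mem_union_left _ hv))
              (by intro v hv hadj
                  obtain ⟨hvC, hvQ⟩ := Finset.mem_sdiff.1 hv
                  exact hvQ (hmiss v hvC hadj))
              (by rw [hQQcard, hcdef])
              (by rw [Finset.card_sdiff_of_subset hQsT1, Finset.card_sdiff_of_subset hQQsub, hT1card, hk,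
                    hQQcard, ← hcdef])
          set q := ψ₇ bd1 with hqdef
          have hqb : ¬ red q := fun h => hbd1 ((hcol₇ bd1).1 h)
          have hqg₀ : G.Adj q g₀ := by
            rw [hqdef, ← hz₇]
            exact ψ₇.map_adj_iff.2 hD34
          have hqC : ∀ v ∈ C, G.Adj q v := by
            intro v hv
            by_cases h : v ∈ QQ
            · obtain ⟨v2, hv2, he⟩ := hQonto₇ v h
              rw [hqdef, ← he]
              exact ψ₇.map_adj_iff.2 (hT1adj v2 (hQsT1 hv2))
            · obtain ⟨v2, hv2, he⟩ := hMonto₇ v (Finset.mem_sdiff.2 ⟨hv, h⟩)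
              rw [hqdef, ← he]
              exact ψ₇.map_adj_iff.2 (hT1adj v2 (Finset.mem_sdiff.1 hv2).1)
          have hqeq := hfullsC q hqb hqC
          rw [hqeq] at hqg₀
          exact hbg₀ hqg₀
        rcases hbg with hbw | hbw
        · exact final Q g1 hQsub hQcard hg1b hg1K hbw
        · exact final Q2 g2 hQ2sub hQ2card hg2b hg2K hbw


/-- in a basic CUH graph realizing `D` and `D̃`, any finite red clique with a
common blue neighbor has two non-adjacent common blue neighbors. -/
theorem stmt_4 {V : Type} (G : SimpleGraph V) (red : V → Prop)
    (hG : IsBasicCUH G red)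
    (hD : Realizes G red Dgraph Dred) (hDt : Realizes G red Dtilde Dred)
    (C : Finset V) (hCred : ∀ v ∈ C, red v)
    (hCcl : ∀ u ∈ C, ∀ v ∈ C, u ≠ v → G.Adj u v)
    (hdom : ∃ b, ¬ red b ∧ ∀ v ∈ C, G.Adj b v) :
    ∃ b₁ b₂, ¬ red b₁ ∧ ¬ red b₂ ∧ b₁ ≠ b₂ ∧ ¬ G.Adj b₁ b₂ ∧
      (∀ v ∈ C, G.Adj b₁ v) ∧ (∀ v ∈ C, G.Adj b₂ v) := by
  obtain ⟨⟨hcount, hinf, hUH, hRC, hBC⟩, hnb, hrp, hbp⟩ := hG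
  obtain ⟨b, hb, hbC⟩ := hdom
  obtain ⟨f, hf, hfne, hfnadj, hfC⟩ :=
    key_lemma G red hUH hRC hBC hbp hD hDt C.card C le_rfl hCred hCcl b hb hbC
  exact ⟨b, f, hb, hf, fun h => hfne h.symm, fun h => hfnadj h.symm, hbC, hfC⟩
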